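/- Let (T, d_T, μ, φ, ρ) be a measured rooted spatial tree: (T,d_T) a complete locally compact real tree, μ a locally finite Borel measure on T, φ: T → M continuous into a metric space, ρ ∈ T. For r > 0 let T^(r) denote the closed ball of radius r about ρ with the restricted metric, measure, map, and root. Then for all r, ε > 0, Δ_c(T^(r), T^(r+ε)) ≤ μ(T^(r+ε) \ T^(r)) + ε + sup{ d_M(φ(x), φ(y)) : x, y ∈ T^(r+ε), d_T(x,y) ≤ ε }, where Δ_c is the Gromov–Hausdorff–Prohorov-type distance on compact measured rooted spatial trees. -/

import Mathlib

open MeasureTheory Metric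

structure RealTreeStruct (T : Type*) [MetricSpace T] where
  arc : T → T → Set T
  arc_comm : ∀ x y, arc x y = arc y x
  mem_left : ∀ x y, x ∈ arc x y
  mem_right : ∀ x y, y ∈ arc x y
  geodesic : ∀ x y z, z ∈ arc x y → dist x z + dist z y = dist x y
  compact : ∀ x y, IsCompact (arc x y)
  connected : ∀ x y, IsConnected (arc x y)
  arc_triangle : ∀ x y z, arc x z ⊆ arc x y ∪ arc y z
  subarc : ∀ x y z, z ∈ arc x y → arc x z ⊆ arc x y
  arc_subset_connected : ∀ x y (A : Set T), IsPreconnected A → x ∈ A → y ∈ A → arc x y ⊆ A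

section TreeAux
open Set

variable {T : Type*} [MetricSpace T]

/-- Projection onto a ball along the arc. -/
lemma tree_proj (RT : RealTreeStruct T) (ρ y : T) {s : ℝ} (hs : 0 ≤ s) :
    ∃ z : T, dist ρ z ≤ s ∧ dist z y ≤ max (dist ρ y - s) 0 := by
  have h1 : min s (dist ρ y) ∈ Icc (dist ρ ρ) (dist ρ y) := by
    rw [dist_self]
    exact ⟨le_min hs dist_nonneg, min_le_right _ _⟩
  have h2 := (RT.connected ρ y).isPreconnected.intermediate_value
      (RT.mem_left ρ y) (RT.mem_right ρ y)
      ((continuous_const.dist continuous_id).continuousOn :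
        ContinuousOn (fun z => dist ρ z) (RT.arc ρ y)) h1
  obtain ⟨z, hz, hdz⟩ := h2
  simp only [id] at hdz
  have hgeo := RT.geodesic ρ y z hz
  refine ⟨z, by rw [hdz]; exact min_le_left _ _, ?_⟩
  rcases le_total s (dist ρ y) with h | h
  · rw [min_eq_left h] at hdz
    have : dist z y = dist ρ y - s := by linarith
    rw [this]; exact le_max_left _ _
  · rw [min_eq_right h] at hdz
    have : dist z y = 0 := by linarith
    rw [this]; exact le_max_right _ _

lemma tree_step [LocallyCompactSpace T] (RT : RealTreeStruct T) (ρ : T) {s : ℝ} (hs : 0 ≤ s)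
    (hc : IsCompact (closedBall ρ s)) : ∃ δ > 0, IsCompact (closedBall ρ (s + δ)) := by
  choose d hd hcd using fun z : T => exists_isCompact_closedBall z
  have hcov : closedBall ρ s ⊆ ⋃ z ∈ closedBall ρ s, ball z (d z / 2) := fun x hx =>
    mem_biUnion hx (mem_ball_self (by linarith [hd x]))
  obtain ⟨t, hts, htfin, hcov'⟩ := hc.elim_finite_subcover_image (fun z _ => isOpen_ball) hcov
  have hne : htfin.toFinset.Nonempty := by
    rcases hcov' (mem_closedBall_self hs) with hx
    simp only [mem_iUnion] at hx
    obtain ⟨z, hz, _⟩ := hx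
    exact ⟨z, htfin.mem_toFinset.2 hz⟩
  set δ : ℝ := htfin.toFinset.inf' hne d / 2 with hδdef
  have hδpos : 0 < δ := by
    apply div_pos _ (by norm_num)
    rw [Finset.lt_inf'_iff]
    exact fun z _ => hd z
  refine ⟨δ, hδpos, ?_⟩
  have hsub : closedBall ρ (s + δ) ⊆ ⋃ z ∈ t, closedBall z (d z) := by
    intro y hy
    obtain ⟨z, hz1, hz2⟩ := tree_proj RT ρ y hs
    have hρy : dist ρ y ≤ s + δ := by rw [dist_comm]; exact mem_closedBall.1 hy
    have hz2' : dist z y ≤ δ := hz2.trans (max_le (by linarith) hδpos.le)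
    have hzρ : z ∈ closedBall ρ s := mem_closedBall.2 (by rw [dist_comm]; exact hz1)
    rcases mem_iUnion₂.1 (hcov' hzρ) with ⟨w, hw, hzw⟩
    refine mem_iUnion₂.2 ⟨w, hw, mem_closedBall.2 ?_⟩
    have h1 : dist w z < d w / 2 := by rw [dist_comm]; exact mem_ball.1 hzw
    have h2 : δ ≤ d w / 2 := by
      have := Finset.inf'_le d (htfin.mem_toFinset.2 hw)
      rw [hδdef]
      linarith
    have h3 := dist_triangle y z w
    rw [dist_comm y z, dist_comm z w] at h3
    linarith
  exact ((htfin.isCompact_biUnion fun z _ => hcd z).of_isClosed_subset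
    isClosed_closedBall hsub)

lemma tree_limit [CompleteSpace T] (RT : RealTreeStruct T) (ρ : T) {s : ℝ} (hs : 0 < s)
    (h : ∀ s', 0 ≤ s' → s' < s → IsCompact (closedBall ρ s')) :
    IsCompact (closedBall ρ s) := by
  refine TotallyBounded.isCompact_of_isClosed ?_ isClosed_closedBall
  rw [Metric.totallyBounded_iff]
  intro η hη
  set s' : ℝ := max (s - η / 3) 0 with hs'def
  have hs'0 : 0 ≤ s' := le_max_right _ _
  have hs's : s' < s := by
    rw [hs'def, max_lt_iff]
    constructor <;> linarith
  have hgap : s - s' ≤ η / 3 := by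
    rw [hs'def]
    rcases le_total (s - η / 3) 0 with h0 | h0
    · rw [max_eq_right h0]; linarith
    · rw [max_eq_left h0]; linarith
  have hc := h s' hs'0 hs's
  obtain ⟨t, htfin, hnet⟩ := (Metric.totallyBounded_iff.1 hc.totallyBounded) (η / 3) (by linarith)
  refine ⟨t, htfin, fun x hx => ?_⟩
  obtain ⟨z, hz1, hz2⟩ := tree_proj RT ρ x hs'0
  have hρx : dist ρ x ≤ s := by rw [dist_comm]; exact mem_closedBall.1 hx
  have hz2' : dist z x ≤ η / 3 := hz2.trans (max_le (by linarith) (by linarith))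
  have hzmem : z ∈ closedBall ρ s' := mem_closedBall.2 (by rw [dist_comm]; exact hz1)
  rcases mem_iUnion₂.1 (hnet hzmem) with ⟨w, hw, hzw⟩
  refine mem_iUnion₂.2 ⟨w, hw, mem_ball.2 ?_⟩
  have h1 : dist z w < η / 3 := mem_ball.1 hzw
  have h3 := dist_triangle x z w
  rw [dist_comm x z] at h3
  linarith

lemma tree_ball_compact [CompleteSpace T] [LocallyCompactSpace T]
    (RT : RealTreeStruct T) (ρ : T) (s : ℝ) : IsCompact (closedBall ρ s) := by
  by_contra hN
  set N : Set ℝ := {u : ℝ | ¬ IsCompact (closedBall ρ u)} with hNdef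
  have hNne : N.Nonempty := ⟨s, hN⟩
  have hneg : ∀ u : ℝ, u < 0 → IsCompact (closedBall ρ u) := fun u hu => by
    rw [closedBall_eq_empty.2 hu]; exact isCompact_empty
  have hlb : ∀ u ∈ N, (0:ℝ) ≤ u := fun u hu => le_of_not_gt fun h => hu (hneg u h)
  have hbdd : BddBelow N := ⟨0, hlb⟩
  set c : ℝ := sInf N with hcdef
  have hc0 : 0 ≤ c := le_csInf hNne hlb
  have hlt : ∀ u, 0 ≤ u → u < c → IsCompact (closedBall ρ u) := fun u _ hu => by
    by_contra h
    exact absurd (csInf_le hbdd h) (not_le.2 hu)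
  have hcc : IsCompact (closedBall ρ c) := by
    rcases eq_or_lt_of_le hc0 with h | h
    · rw [← h, closedBall_zero]; exact isCompact_singleton
    · exact tree_limit RT ρ h hlt
  obtain ⟨δ, hδ, hcδ⟩ := tree_step RT ρ hc0 hcc
  have hkey : ∀ u ∈ N, c + δ ≤ u := by
    intro u hu
    by_contra h
    exact hu (hcδ.of_isClosed_subset isClosed_closedBall
      (closedBall_subset_closedBall (le_of_not_ge h)))
  linarith [le_csInf hNne hkey]

end TreeAux

/-- `dZ` is a pseudometric. -/
def IsPseudoMetric {Z : Type*} (dZ : Z → Z → ℝ) : Prop :=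
  (∀ a, dZ a a = 0) ∧ (∀ a b, dZ a b = dZ b a) ∧
  (∀ a b c, dZ a c ≤ dZ a b + dZ b c) ∧ (∀ a b, 0 ≤ dZ a b)

/-- The Prohorov distance between two measures on `Z`, with respect to an arbitrary
pseudometric `dZ` on `Z`. -/
noncomputable def prohorovWrt {Z : Type*} [MeasurableSpace Z] (dZ : Z → Z → ℝ)
    (m m' : Measure Z) : ℝ :=
  sInf {δ : ℝ | 0 < δ ∧ ∀ A : Set Z,
    m A ≤ m' {b | ∃ a ∈ A, dZ a b < δ} + ENNReal.ofReal δ ∧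
    m' A ≤ m {b | ∃ a ∈ A, dZ a b < δ} + ENNReal.ofReal δ}

/-- The Gromov–Hausdorff–Prohorov-type distance `Δ_c` between two compact measured rooted
spatial trees `(X, d, μ, φ, ρ)` and `(X', d', μ', φ', ρ')`: the infimum over pseudometrics
on `X ⊕ X'` extending the two metrics and over correspondences `C ⊆ X × X'` containing the
pair of roots, of the Prohorov distance between the two (embedded) measures plus the
supremum over `(x,x') ∈ C` of `d_Z(x,x') + d_M(φ(x), φ'(x'))`. -/
noncomputable def DeltaC {X X' M : Type*} [MetricSpace X] [MetricSpace X'] [MetricSpace M]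
    [MeasurableSpace X] [MeasurableSpace X']
    (μ : Measure X) (μ' : Measure X') (φ : X → M) (φ' : X' → M) (ρ : X) (ρ' : X') : ℝ :=
  sInf {v : ℝ | ∃ dZ : (X ⊕ X') → (X ⊕ X') → ℝ, IsPseudoMetric dZ ∧
    (∀ a b : X, dZ (Sum.inl a) (Sum.inl b) = dist a b) ∧
    (∀ a b : X', dZ (Sum.inr a) (Sum.inr b) = dist a b) ∧
    ∃ C : Set (X × X'), (ρ, ρ') ∈ C ∧
      (∀ x : X, ∃ x' : X', (x, x') ∈ C) ∧ (∀ x' : X', ∃ x : X, (x, x') ∈ C) ∧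
      v = prohorovWrt dZ (μ.map Sum.inl) (μ'.map Sum.inr) +
        sSup {w : ℝ | ∃ p ∈ C,
          w = dZ (Sum.inl p.1) (Sum.inr p.2) + dist (φ p.1) (φ' p.2)}}

/-- For a measured rooted spatial tree `(T, d_T, μ, φ, ρ)` (a complete, locally compact
real tree with a locally finite Borel measure and a continuous map `φ : T → M`), the
restrictions `T^(r)`, `T^(r+ε)` to closed balls about the root satisfy
`Δ_c(T^(r), T^(r+ε)) ≤ μ(T^(r+ε) ∖ T^(r)) + ε + sup{ d_M(φx,φy) : x,y ∈ T^(r+ε), d_T(x,y) ≤ ε }`. -/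
theorem stmt15 {T M : Type*} [MetricSpace T] [MeasurableSpace T] [BorelSpace T]
    [CompleteSpace T] [LocallyCompactSpace T] [MetricSpace M]
    (RT : RealTreeStruct T) (μ : Measure T) [IsLocallyFiniteMeasure μ]
    (φ : T → M) (hφ : Continuous φ) (ρ : T) (r ε : ℝ) (hr : 0 < r) (hε : 0 < ε) :
    DeltaC
      (μ.comap (Subtype.val : Metric.closedBall ρ r → T))
      (μ.comap (Subtype.val : Metric.closedBall ρ (r + ε) → T))
      (fun x => φ x.1) (fun x => φ x.1)
      (⟨ρ, Metric.mem_closedBall_self hr.le⟩ : Metric.closedBall ρ r)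
      (⟨ρ, Metric.mem_closedBall_self (by positivity)⟩ : Metric.closedBall ρ (r + ε)) ≤
    (μ (Metric.closedBall ρ (r + ε) \ Metric.closedBall ρ r)).toReal + ε +
      sSup {w : ℝ | ∃ x ∈ Metric.closedBall ρ (r + ε), ∃ y ∈ Metric.closedBall ρ (r + ε),
        dist x y ≤ ε ∧ w = dist (φ x) (φ y)} := by
  classical
  have hrε : (0:ℝ) < r + ε := by positivity
  have hsub : closedBall ρ r ⊆ closedBall ρ (r + ε) :=
    closedBall_subset_closedBall (by linarith)
  have hK : IsCompact (closedBall ρ (r + ε)) := tree_ball_compact RT ρ _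
  -- bound on φ over the big ball
  obtain ⟨B, hB⟩ := Metric.isBounded_iff.1 (hK.image hφ).isBounded
  set SS : Set ℝ := {w : ℝ | ∃ x ∈ Metric.closedBall ρ (r + ε), ∃ y ∈ Metric.closedBall ρ (r + ε),
        dist x y ≤ ε ∧ w = dist (φ x) (φ y)} with hSSdef
  have hSbdd : BddAbove SS := by
    refine ⟨B, fun w hw => ?_⟩
    obtain ⟨x, hx, y, hy, -, rfl⟩ := hw
    exact hB (Set.mem_image_of_mem φ hx) (Set.mem_image_of_mem φ hy)
  have hS0 : 0 ≤ sSup SS := by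
    have h0 : dist (φ ρ) (φ ρ) ≤ sSup SS :=
      le_csSup hSbdd ⟨ρ, mem_closedBall_self hrε.le, ρ, mem_closedBall_self hrε.le,
        by simp [hε.le], rfl⟩
    simpa using h0
  -- measurable embeddings
  have mev1 : MeasurableEmbedding (Subtype.val : closedBall ρ r → T) :=
    MeasurableEmbedding.subtype_coe measurableSet_closedBall
  have mev2 : MeasurableEmbedding (Subtype.val : closedBall ρ (r + ε) → T) :=
    MeasurableEmbedding.subtype_coe measurableSet_closedBall
  have mel : MeasurableEmbedding
      (Sum.inl : closedBall ρ r → (closedBall ρ r) ⊕ (closedBall ρ (r + ε))) :=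
    ⟨Sum.inl_injective, measurable_inl, fun _ hs => hs.inl_image⟩
  have mer : MeasurableEmbedding
      (Sum.inr : closedBall ρ (r + ε) → (closedBall ρ r) ⊕ (closedBall ρ (r + ε))) :=
    ⟨Sum.inr_injective, measurable_inr, fun _ hs => hs.inr_image⟩
  set f : (closedBall ρ r) ⊕ (closedBall ρ (r + ε)) → T :=
    Sum.elim Subtype.val Subtype.val with hfdef
  set dZ : ((closedBall ρ r) ⊕ (closedBall ρ (r + ε))) →
      ((closedBall ρ r) ⊕ (closedBall ρ (r + ε))) → ℝ :=
    fun a b => dist (f a) (f b) with hdZdef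
  set C : Set ((closedBall ρ r) × (closedBall ρ (r + ε))) :=
    {p | dist (p.1 : T) (p.2 : T) ≤ ε} with hCdef
  set M₁ : Measure ((closedBall ρ r) ⊕ (closedBall ρ (r + ε))) :=
    (μ.comap (Subtype.val : closedBall ρ r → T)).map
      (Sum.inl : closedBall ρ r → (closedBall ρ r) ⊕ (closedBall ρ (r + ε))) with hM1
  set M₂ : Measure ((closedBall ρ r) ⊕ (closedBall ρ (r + ε))) :=
    (μ.comap (Subtype.val : closedBall ρ (r + ε) → T)).map
      (Sum.inr : closedBall ρ (r + ε) → (closedBall ρ r) ⊕ (closedBall ρ (r + ε))) with hM2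
  set W : Set ℝ := {w : ℝ | ∃ p ∈ C,
      w = dZ (Sum.inl p.1) (Sum.inr p.2) +
        dist ((fun x : closedBall ρ r => φ x.1) p.1)
          ((fun x : closedBall ρ (r + ε) => φ x.1) p.2)} with hWdef
  set v : ℝ := prohorovWrt dZ M₁ M₂ + sSup W with hvdef
  set t : ℝ := (μ (closedBall ρ (r + ε) \ closedBall ρ r)).toReal with htdef
  have hDfin : μ (closedBall ρ (r + ε) \ closedBall ρ r) ≠ ⊤ :=
    ((measure_mono Set.diff_subset).trans_lt hK.measure_lt_top).ne
  -- the witness is in the defining set of DeltaC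
  have hmem : v ∈ {v : ℝ | ∃ dZ' : ((closedBall ρ r) ⊕ (closedBall ρ (r + ε))) →
      ((closedBall ρ r) ⊕ (closedBall ρ (r + ε))) → ℝ, IsPseudoMetric dZ' ∧
      (∀ a b : closedBall ρ r, dZ' (Sum.inl a) (Sum.inl b) = dist a b) ∧
      (∀ a b : closedBall ρ (r + ε), dZ' (Sum.inr a) (Sum.inr b) = dist a b) ∧
      ∃ C' : Set ((closedBall ρ r) × (closedBall ρ (r + ε))),
        ((⟨ρ, Metric.mem_closedBall_self hr.le⟩ : closedBall ρ r),
         (⟨ρ, Metric.mem_closedBall_self (by positivity)⟩ : closedBall ρ (r + ε))) ∈ C' ∧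
        (∀ x, ∃ x', (x, x') ∈ C') ∧ (∀ x', ∃ x, (x, x') ∈ C') ∧
        v = prohorovWrt dZ' M₁ M₂ + sSup {w : ℝ | ∃ p ∈ C',
          w = dZ' (Sum.inl p.1) (Sum.inr p.2) +
            dist ((fun x : closedBall ρ r => φ x.1) p.1)
              ((fun x : closedBall ρ (r + ε) => φ x.1) p.2)}} := by
    refine ⟨dZ, ⟨fun a => dist_self _, fun a b => dist_comm _ _,
        fun a b c => dist_triangle _ _ _, fun a b => dist_nonneg⟩,
      fun a b => (Subtype.dist_eq a b).symm, fun a b => (Subtype.dist_eq a b).symm,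
      C, by simp [hCdef, hε.le], ?_, ?_, rfl⟩
    · intro x
      exact ⟨⟨x.1, hsub x.2⟩, by simp [hCdef, hε.le]⟩
    · intro x'
      obtain ⟨z, hz1, hz2⟩ := tree_proj RT ρ x'.1 hr.le
      have hx' : dist ρ (x':T) ≤ r + ε := by rw [dist_comm]; exact mem_closedBall.1 x'.2
      refine ⟨⟨z, mem_closedBall.2 (by rw [dist_comm]; exact hz1)⟩, ?_⟩
      simp only [hCdef, Set.mem_setOf_eq]
      exact hz2.trans (max_le (by linarith) hε.le)
  -- Prohorov bound
  have hproh : prohorovWrt dZ M₁ M₂ ≤ t := by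
    refine le_of_forall_pos_le_add fun η hη => ?_
    refine csInf_le ⟨0, fun δ hδ => hδ.1.le⟩ ?_
    have ht0 : 0 ≤ t := ENNReal.toReal_nonneg
    refine ⟨by linarith, fun A => ⟨?_, ?_⟩⟩
    · rw [hM1, hM2, mel.map_apply, mer.map_apply, mev1.comap_apply, mev2.comap_apply]
      refine le_trans (measure_mono ?_) le_self_add
      rintro x ⟨a, ha, rfl⟩
      refine ⟨⟨a.1, hsub a.2⟩, ⟨Sum.inl a, ha, ?_⟩, rfl⟩
      simp only [hdZdef, hfdef, Sum.elim_inl, Sum.elim_inr, dist_self]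
      linarith
    · rw [hM1, hM2, mel.map_apply, mer.map_apply, mev1.comap_apply, mev2.comap_apply]
      set S' : Set T := Subtype.val '' (Sum.inr ⁻¹' A) with hS'def
      have hsplit : μ S' ≤ μ (S' ∩ closedBall ρ r) + μ (S' \ closedBall ρ r) := by
        conv_lhs => rw [← Set.inter_union_diff S' (closedBall ρ r)]
        apply measure_union_le
      have h21 : μ (S' ∩ closedBall ρ r) ≤
          μ (Subtype.val '' (Sum.inl ⁻¹'
            {b | ∃ a ∈ A, dZ a b < t + η})) := by
        apply measure_mono
        rintro x ⟨⟨a', ha', rfl⟩, hxr⟩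
        refine ⟨⟨a'.1, hxr⟩, ⟨Sum.inr a', ha', ?_⟩, rfl⟩
        simp only [hdZdef, hfdef, Sum.elim_inl, Sum.elim_inr, dist_self]
        linarith
      have h22a : S' ⊆ closedBall ρ (r + ε) := Subtype.coe_image_subset _ _
      have h22 : μ (S' \ closedBall ρ r) ≤ ENNReal.ofReal (t + η) := by
        refine le_trans (measure_mono (Set.diff_subset_diff_left h22a)) ?_
        rw [← ENNReal.ofReal_toReal hDfin]
        exact ENNReal.ofReal_le_ofReal (by linarith)
      calc μ S' ≤ μ (S' ∩ closedBall ρ r) + μ (S' \ closedBall ρ r) := hsplit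
        _ ≤ _ := add_le_add h21 h22
  -- sup bound
  have hsup : sSup W ≤ ε + sSup SS := by
    refine Real.sSup_le ?_ (by linarith)
    rintro w ⟨p, hp, rfl⟩
    have h1 : dZ (Sum.inl p.1) (Sum.inr p.2) ≤ ε := hp
    have h2 : dist (φ p.1.1) (φ p.2.1) ≤ sSup SS :=
      le_csSup hSbdd ⟨p.1.1, hsub p.1.2, p.2.1, p.2.2, hp, rfl⟩
    simpa using add_le_add h1 h2
  -- conclude
  have hDC : DeltaC
      (μ.comap (Subtype.val : Metric.closedBall ρ r → T))
      (μ.comap (Subtype.val : Metric.closedBall ρ (r + ε) → T))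
      (fun x => φ x.1) (fun x => φ x.1)
      (⟨ρ, Metric.mem_closedBall_self hr.le⟩ : Metric.closedBall ρ r)
      (⟨ρ, Metric.mem_closedBall_self (by positivity)⟩ : Metric.closedBall ρ (r + ε)) ≤ v := by
    refine csInf_le ⟨0, ?_⟩ hmem
    rintro u ⟨dZ', hpm, -, -, C', -, -, -, rfl⟩
    refine add_nonneg (Real.sInf_nonneg fun δ hδ => hδ.1.le)
      (Real.sSup_nonneg ?_)
    rintro w ⟨p, -, rfl⟩
    exact add_nonneg (hpm.2.2.2 _ _) dist_nonneg
  calc DeltaC _ _ _ _ _ _ ≤ v := hDC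
    _ = prohorovWrt dZ M₁ M₂ + sSup W := hvdef
    _ ≤ t + (ε + sSup SS) := add_le_add hproh hsup
    _ = t + ε + sSup SS := by ring
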